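/- Let n ≥ 1 and let V be an n × n unitary matrix all of whose entries lie in the ring ℤ[1/√2] = {x₀ + x₁√2 : x₀, x₁ ∈ ℤ[1/2]}. Then there exist finitely many generators G₁, …, G_ℓ, each taken from the set {(-1)_[a], X_[a,b], H_[a,b] : a, b distinct elements of {1,…,n}}, such that G₁ ⋯ G_ℓ V = I. -/

import Mathlib

open Matrix Complex

noncomputable section

/-- The `m`-level operator of type `W` with indices `f 0, …, f (m-1)`:
for injective `f`, its `(f j', f k')` entry is `W j' k'` and it agrees
with the identity matrix elsewhere. -/
def levelOp {n m : ℕ} (f : Fin m → Fin n) (W : Matrix (Fin m) (Fin m) ℂ) :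
    Matrix (Fin n) (Fin n) ℂ := fun j k =>
  (∑ j' : Fin m, ∑ k' : Fin m, if f j' = j ∧ f k' = k then W j' k' else 0) +
  (if j = k ∧ ∀ j' : Fin m, f j' ≠ j then 1 else 0)

/-- The NOT gate `X`. -/
def Xmat : Matrix (Fin 2) (Fin 2) ℂ := !![0, 1; 1, 0]

/-- The Hadamard gate `H`. -/
def Hmat : Matrix (Fin 2) (Fin 2) ℂ := (Real.sqrt 2 : ℂ)⁻¹ • !![1, 1; 1, -1]

/-- `G` is one of the generators `(-1)_[a]`, `X_[a,b]`, `H_[a,b]` with `a ≠ b`. -/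
def IsRealGen {n : ℕ} (G : Matrix (Fin n) (Fin n) ℂ) : Prop :=
  (∃ a : Fin n, G = levelOp ![a] !![-1]) ∨
  (∃ a b : Fin n, a ≠ b ∧ G = levelOp ![a, b] Xmat) ∨
  (∃ a b : Fin n, a ≠ b ∧ G = levelOp ![a, b] Hmat)

/-- `x` is a dyadic fraction: an element of `ℤ[1/2]` (viewed inside `ℂ`). -/
def IsDyadic (x : ℂ) : Prop := ∃ (u : ℤ) (q : ℕ), x = (u : ℂ) / 2 ^ q

/-- `x` belongs to the ring `ℤ[1/√2] = {x₀ + x₁√2 : x₀, x₁ ∈ ℤ[1/2]}`. -/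
def InDSqrt2 (x : ℂ) : Prop :=
  ∃ x₀ x₁ : ℂ, IsDyadic x₀ ∧ IsDyadic x₁ ∧ x = x₀ + x₁ * Real.sqrt 2

-- basic sqrt2 facts
abbrev c2 : ℂ := (Real.sqrt 2 : ℝ)

lemma c2_sq : c2 * c2 = 2 := by
  have h : Real.sqrt 2 * Real.sqrt 2 = 2 := Real.mul_self_sqrt (by norm_num)
  calc c2 * c2 = ((Real.sqrt 2 * Real.sqrt 2 : ℝ) : ℂ) := by push_cast; ring
  _ = 2 := by rw [h]; norm_num
lemma c2_ne : c2 ≠ 0 := by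
  simp [c2, Real.sqrt_eq_zero']
lemma conj_c2 : (starRingEnd ℂ) c2 = c2 := Complex.conj_ofReal _

lemma int_indep (A B : ℤ) (h : (A:ℂ) + B * c2 = 0) : A = 0 ∧ B = 0 := by
  have hr : (A:ℝ) + B * Real.sqrt 2 = 0 := by
    have := congrArg Complex.re h
    simpa using this
  have hB : B = 0 := by
    by_contra hB
    apply irrational_sqrt_two
    refine ⟨(-A : ℚ)/(B:ℚ), ?_⟩
    have hBne : (B:ℝ) ≠ 0 := Int.cast_ne_zero.mpr hB
    push_cast
    field_simp
    linarith
  constructor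
  · exact_mod_cast by simpa [hB] using hr
  · exact hB

-- sum over pair helper
lemma sum_pair {n : ℕ} {M : Type*} [AddCommMonoid M] {i j : Fin n} (hij : i ≠ j)
    (g : Fin n → M) :
    ∑ x, g x = g i + g j + ∑ x ∈ Finset.univ \ {i, j}, g x := by
  have h1 : ({i, j} : Finset (Fin n)) ⊆ Finset.univ := Finset.subset_univ _
  rw [← Finset.sum_sdiff h1, Finset.sum_pair hij]
  abel

lemma levelOp1_apply {n : ℕ} (a : Fin n) (W : Matrix (Fin 1) (Fin 1) ℂ) (j k : Fin n) :
    levelOp ![a] W j k =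
      if j = a then (if k = a then W 0 0 else 0) else (if j = k then 1 else 0) := by
  simp only [levelOp, Fin.sum_univ_one]
  have : (![a] : Fin 1 → Fin n) 0 = a := rfl
  rw [this]
  by_cases hj : j = a <;> by_cases hk : k = a <;>
    simp_all [Fin.forall_fin_one, eq_comm]

lemma levelOp2_apply {n : ℕ} {a b : Fin n} (hab : a ≠ b) (W : Matrix (Fin 2) (Fin 2) ℂ)
    (j k : Fin n) :
    levelOp ![a, b] W j k =
      if j = a then (if k = a then W 0 0 else if k = b then W 0 1 else 0)
      else if j = b then (if k = a then W 1 0 else if k = b then W 1 1 else 0)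
      else (if j = k then 1 else 0) := by
  simp only [levelOp, Fin.sum_univ_two]
  have h0 : (![a, b] : Fin 2 → Fin n) 0 = a := rfl
  have h1 : (![a, b] : Fin 2 → Fin n) 1 = b := rfl
  rw [h0, h1]
  by_cases hj : j = a <;> by_cases hk : k = a <;> by_cases hj' : j = b <;> by_cases hk' : k = b <;>
    simp_all [Fin.forall_fin_two, eq_comm]

-- dot product helpers
lemma dotDelta {n : ℕ} (x : Fin n) (v : Fin n → ℂ) :
    ∑ k, (if x = k then (1:ℂ) else 0) * v k = v x := by
  simp [ite_mul, Finset.sum_ite_eq]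

lemma dotTwo {n : ℕ} {a b : Fin n} (hab : a ≠ b) (c d : ℂ) (v : Fin n → ℂ) :
    ∑ k, (if k = a then c else if k = b then d else 0) * v k = c * v a + d * v b := by
  have h : ∀ k, (if k = a then c else if k = b then d else 0) * v k
      = (if k = a then c * v a else 0) + (if k = b then d * v b else 0) := by
    intro k
    rcases eq_or_ne k a with h1 | h1
    · subst h1; simp [hab]
    · rcases eq_or_ne k b with h2 | h2
      · subst h2; simp [h1]
      · simp [h1, h2]
  rw [Finset.sum_congr rfl fun k _ => h k, Finset.sum_add_distrib,
    Finset.sum_ite_eq', Finset.sum_ite_eq']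
  simp

lemma dotOne {n : ℕ} (a : Fin n) (c : ℂ) (v : Fin n → ℂ) :
    ∑ k, (if k = a then c else 0) * v k = c * v a := by
  simp [ite_mul, Finset.sum_ite_eq']

-- generator abbreviations
def negG {n : ℕ} (a : Fin n) : Matrix (Fin n) (Fin n) ℂ := levelOp ![a] !![-1]
def xG {n : ℕ} (a b : Fin n) : Matrix (Fin n) (Fin n) ℂ := levelOp ![a, b] Xmat
def hG {n : ℕ} (a b : Fin n) : Matrix (Fin n) (Fin n) ℂ := levelOp ![a, b] Hmat

lemma negG_apply {n : ℕ} (a : Fin n) (j k : Fin n) :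
    negG a j k = if j = a then (if k = a then -1 else 0) else (if j = k then 1 else 0) := by
  rw [negG, levelOp1_apply]; norm_num

lemma xG_apply {n : ℕ} {a b : Fin n} (hab : a ≠ b) (j k : Fin n) :
    xG a b j k = if j = a then (if k = b then 1 else 0)
      else if j = b then (if k = a then 1 else 0)
      else (if j = k then 1 else 0) := by
  rw [xG, levelOp2_apply hab]
  by_cases hj : j = a <;> by_cases hk : k = a <;> by_cases hk' : k = b <;>
    simp_all [Xmat, hab]

lemma hG_apply {n : ℕ} {a b : Fin n} (hab : a ≠ b) (j k : Fin n) :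
    hG a b j k = if j = a then (if k = a then c2⁻¹ else if k = b then c2⁻¹ else 0)
      else if j = b then (if k = a then c2⁻¹ else if k = b then -c2⁻¹ else 0)
      else (if j = k then 1 else 0) := by
  rw [hG, levelOp2_apply hab]
  by_cases hj : j = a <;> by_cases hj' : j = b <;> by_cases hk : k = a <;> by_cases hk' : k = b <;>
    simp_all [Hmat, c2]

-- mulVec actions
lemma negG_mulVec {n : ℕ} (a : Fin n) (v : Fin n → ℂ) :
    (negG a).mulVec v = fun x => if x = a then -v a else v x := by
  funext x
  simp only [Matrix.mulVec, dotProduct, negG_apply]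
  by_cases hx : x = a
  · subst hx
    simp only [eq_self_iff_true, if_true]
    rw [dotOne]; ring
  · simp only [hx, if_false]
    exact dotDelta x v

lemma xG_mulVec {n : ℕ} {a b : Fin n} (hab : a ≠ b) (v : Fin n → ℂ) :
    (xG a b).mulVec v = fun x => if x = a then v b else if x = b then v a else v x := by
  funext x
  simp only [Matrix.mulVec, dotProduct, xG_apply hab]
  by_cases hx : x = a
  · subst hx
    simp only [eq_self_iff_true, if_true]
    rw [dotOne]; ring
  · by_cases hx' : x = b
    · subst hx'
      simp only [hx, eq_self_iff_true, if_true, if_false]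
      rw [dotOne]; ring
    · simp only [hx, hx', if_false]
      exact dotDelta x v

lemma hG_mulVec {n : ℕ} {a b : Fin n} (hab : a ≠ b) (v : Fin n → ℂ) :
    (hG a b).mulVec v = fun x => if x = a then c2⁻¹ * (v a + v b)
      else if x = b then c2⁻¹ * (v a - v b) else v x := by
  funext x
  simp only [Matrix.mulVec, dotProduct, hG_apply hab]
  by_cases hx : x = a
  · subst hx
    simp only [eq_self_iff_true, if_true]
    rw [dotTwo hab]; ring
  · by_cases hx' : x = b
    · subst hx'
      simp only [hx, eq_self_iff_true, if_true, if_false]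
      rw [dotTwo hab]; ring
    · simp only [hx, hx', if_false]
      exact dotDelta x v

lemma conj_c2_inv : (starRingEnd ℂ) c2⁻¹ = c2⁻¹ := by
  rw [map_inv₀, conj_c2]

lemma c2_inv_mul : c2⁻¹ * c2⁻¹ * 2 = 1 := by
  field_simp [c2_ne]
  rw [sq, c2_sq]

lemma tail_sum {n : ℕ} (s : Finset (Fin n)) (j k : Fin n) :
    ∑ x ∈ s, star (if x = j then (1:ℂ) else 0) * (if x = k then 1 else 0)
      = if j ∈ s ∧ j = k then 1 else 0 := by
  have h : ∀ x, star (if x = j then (1:ℂ) else 0) * (if x = k then 1 else 0)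
      = if x = j then (if j = k then 1 else 0) else 0 := by
    intro x
    rcases eq_or_ne x j with h1 | h1
    · subst h1; simp [eq_comm]
    · simp [h1]
  rw [Finset.sum_congr rfl fun x _ => h x, Finset.sum_ite_eq']
  by_cases hj : j ∈ s <;> by_cases hjk : j = k <;> simp [hj, hjk]

lemma negG_unitary {n : ℕ} (a : Fin n) : negG a ∈ Matrix.unitaryGroup (Fin n) ℂ := by
  rw [Matrix.mem_unitaryGroup_iff']
  ext j k
  simp only [Matrix.mul_apply, Matrix.conjTranspose_apply, Matrix.star_apply, Matrix.one_apply]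
  rw [← Finset.add_sum_erase Finset.univ _ (Finset.mem_univ a)]
  have hrow : ∀ x ∈ Finset.univ.erase a, star (negG a x j) * negG a x k
      = star (if x = j then (1:ℂ) else 0) * (if x = k then 1 else 0) := by
    intro x hx
    have h1 : x ≠ a := Finset.ne_of_mem_erase hx
    simp only [negG_apply, h1, if_false]
  rw [Finset.sum_congr rfl hrow]
  rw [tail_sum]
  rw [negG_apply, if_pos rfl, negG_apply, if_pos rfl]
  by_cases hja : j = a <;> by_cases hka : k = a <;> by_cases hjk : j = k <;>
    simp_all [Complex.star_def, Finset.mem_erase]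

lemma xG_unitary {n : ℕ} {a b : Fin n} (hab : a ≠ b) :
    xG a b ∈ Matrix.unitaryGroup (Fin n) ℂ := by
  rw [Matrix.mem_unitaryGroup_iff']
  ext j k
  simp only [Matrix.mul_apply, Matrix.conjTranspose_apply, Matrix.star_apply, Matrix.one_apply]
  rw [sum_pair hab]
  have hrow : ∀ x ∈ Finset.univ \ {a, b}, star (xG a b x j) * xG a b x k
      = star (if x = j then (1:ℂ) else 0) * (if x = k then 1 else 0) := by
    intro x hx
    simp only [Finset.mem_sdiff, Finset.mem_insert, Finset.mem_singleton, not_or] at hx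
    simp only [xG_apply hab, hx.2.1, hx.2.2, if_false]
  rw [Finset.sum_congr rfl hrow]
  rw [tail_sum]
  rw [xG_apply hab, if_pos rfl, xG_apply hab, if_pos rfl,
    xG_apply hab (j := b), if_neg (Ne.symm hab), if_pos rfl,
    xG_apply hab (j := b) (k := k), if_neg (Ne.symm hab), if_pos rfl]
  by_cases hja : j = a <;> by_cases hjb : j = b <;> by_cases hka : k = a <;>
    by_cases hkb : k = b <;> by_cases hjk : j = k <;>
    simp_all [Complex.star_def, Finset.mem_sdiff]

lemma hG_unitary {n : ℕ} {a b : Fin n} (hab : a ≠ b) :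
    hG a b ∈ Matrix.unitaryGroup (Fin n) ℂ := by
  rw [Matrix.mem_unitaryGroup_iff']
  ext j k
  simp only [Matrix.mul_apply, Matrix.conjTranspose_apply, Matrix.star_apply, Matrix.one_apply]
  rw [sum_pair hab]
  have hrow : ∀ x ∈ Finset.univ \ {a, b}, star (hG a b x j) * hG a b x k
      = star (if x = j then (1:ℂ) else 0) * (if x = k then 1 else 0) := by
    intro x hx
    simp only [Finset.mem_sdiff, Finset.mem_insert, Finset.mem_singleton, not_or] at hx
    simp only [hG_apply hab, hx.2.1, hx.2.2, if_false]
  rw [Finset.sum_congr rfl hrow]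
  rw [tail_sum]
  rw [hG_apply hab, if_pos rfl, hG_apply hab, if_pos rfl,
    hG_apply hab (j := b), if_neg (Ne.symm hab), if_pos rfl,
    hG_apply hab (j := b) (k := k), if_neg (Ne.symm hab), if_pos rfl]
  by_cases hja : j = a <;> by_cases hjb : j = b <;> by_cases hka : k = a <;>
    by_cases hkb : k = b <;> by_cases hjk : j = k <;>
    simp_all [Complex.star_def, conj_c2_inv, map_neg, Finset.mem_sdiff] <;>
    linear_combination c2_inv_mul

-- ring lemmas for IsDyadic / InDSqrt2
lemma isDyadic_iff {x : ℂ} : IsDyadic x ↔ ∃ (u : ℤ) (q : ℕ), x * 2 ^ q = u := by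
  constructor
  · rintro ⟨u, q, rfl⟩
    exact ⟨u, q, by field_simp⟩
  · rintro ⟨u, q, h⟩
    exact ⟨u, q, by rw [← h]; field_simp⟩

lemma IsDyadic.add {x y : ℂ} (hx : IsDyadic x) (hy : IsDyadic y) : IsDyadic (x + y) := by
  rw [isDyadic_iff] at *
  obtain ⟨u, q, hu⟩ := hx
  obtain ⟨v, p, hv⟩ := hy
  refine ⟨u * 2 ^ p + v * 2 ^ q, q + p, ?_⟩
  push_cast
  rw [← hu, ← hv]
  ring

lemma IsDyadic.mul {x y : ℂ} (hx : IsDyadic x) (hy : IsDyadic y) : IsDyadic (x * y) := by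
  rw [isDyadic_iff] at *
  obtain ⟨u, q, hu⟩ := hx
  obtain ⟨v, p, hv⟩ := hy
  refine ⟨u * v, q + p, ?_⟩
  push_cast
  rw [← hu, ← hv]
  ring

lemma IsDyadic.zero : IsDyadic 0 := ⟨0, 0, by norm_num⟩
lemma IsDyadic.one : IsDyadic 1 := ⟨1, 0, by norm_num⟩
lemma IsDyadic.neg {x : ℂ} (hx : IsDyadic x) : IsDyadic (-x) := by
  obtain ⟨u, q, rfl⟩ := hx
  exact ⟨-u, q, by push_cast; ring⟩
lemma IsDyadic.half : IsDyadic (2⁻¹ : ℂ) := ⟨1, 1, by norm_num⟩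
lemma IsDyadic.two : IsDyadic (2 : ℂ) := ⟨2, 0, by norm_num⟩

lemma InDSqrt2.add {x y : ℂ} (hx : InDSqrt2 x) (hy : InDSqrt2 y) : InDSqrt2 (x + y) := by
  obtain ⟨x0, x1, hx0, hx1, rfl⟩ := hx
  obtain ⟨y0, y1, hy0, hy1, rfl⟩ := hy
  exact ⟨x0 + y0, x1 + y1, hx0.add hy0, hx1.add hy1, by ring⟩

lemma InDSqrt2.mul {x y : ℂ} (hx : InDSqrt2 x) (hy : InDSqrt2 y) : InDSqrt2 (x * y) := by
  obtain ⟨x0, x1, hx0, hx1, rfl⟩ := hx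
  obtain ⟨y0, y1, hy0, hy1, rfl⟩ := hy
  refine ⟨x0 * y0 + 2 * (x1 * y1), x0 * y1 + x1 * y0,
    (hx0.mul hy0).add (IsDyadic.two.mul (hx1.mul hy1)),
    (hx0.mul hy1).add (hx1.mul hy0), ?_⟩
  linear_combination (x1 * y1) * c2_sq

lemma InDSqrt2.zero : InDSqrt2 0 := ⟨0, 0, IsDyadic.zero, IsDyadic.zero, by ring⟩
lemma InDSqrt2.one : InDSqrt2 1 := ⟨1, 0, IsDyadic.one, IsDyadic.zero, by ring⟩
lemma InDSqrt2.neg {x : ℂ} (hx : InDSqrt2 x) : InDSqrt2 (-x) := by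
  obtain ⟨x0, x1, hx0, hx1, rfl⟩ := hx
  exact ⟨-x0, -x1, hx0.neg, hx1.neg, by ring⟩

lemma c2_sq' : c2 ^ 2 = 2 := by rw [sq]; exact c2_sq

lemma InDSqrt2.c2inv : InDSqrt2 c2⁻¹ := by
  refine ⟨0, 2⁻¹, IsDyadic.zero, IsDyadic.half, ?_⟩
  rw [zero_add, inv_eq_iff_eq_inv, eq_comm, inv_eq_one_div,
    div_eq_iff (show (2⁻¹ * c2 : ℂ) ≠ 0 by simp [c2_ne])]
  rw [show c2 * (2⁻¹ * c2) = 2⁻¹ * (c2 * c2) by ring, c2_sq]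
  norm_num

lemma InDSqrt2.sum {ι : Type*} (s : Finset ι) (f : ι → ℂ) (h : ∀ i ∈ s, InDSqrt2 (f i)) :
    InDSqrt2 (∑ i ∈ s, f i) := by
  classical
  induction s using Finset.induction_on with
  | empty => simpa using InDSqrt2.zero
  | insert a s hni ih =>
    rw [Finset.sum_insert hni]
    exact (h a (Finset.mem_insert_self a s)).add
      (ih fun i hi => h i (Finset.mem_insert_of_mem hi))

lemma InDSqrt2.real {x : ℂ} (hx : InDSqrt2 x) : (starRingEnd ℂ) x = x := by
  obtain ⟨x0, x1, ⟨u, q, rfl⟩, ⟨v, p, rfl⟩, rfl⟩ := hx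
  simp only [map_add, _root_.map_mul, map_div₀, map_pow, map_intCast, map_ofNat, conj_c2]

-- entries of generators are in the ring
lemma InDSqrt2.neg_c2inv : InDSqrt2 (-c2⁻¹) := InDSqrt2.c2inv.neg
lemma InDSqrt2.negone : InDSqrt2 (-1 : ℂ) := InDSqrt2.one.neg

lemma isRealGen_entries {n : ℕ} {G : Matrix (Fin n) (Fin n) ℂ} (h : IsRealGen G) :
    ∀ j k, InDSqrt2 (G j k) := by
  intro j k
  rcases h with ⟨a, rfl⟩ | ⟨a, b, hab, rfl⟩ | ⟨a, b, hab, rfl⟩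
  · rw [show levelOp ![a] !![-1] = negG a from rfl, negG_apply]
    split_ifs <;> first
      | exact InDSqrt2.negone
      | exact InDSqrt2.zero
      | exact InDSqrt2.one
  · rw [show levelOp ![a, b] Xmat = xG a b from rfl, xG_apply hab]
    split_ifs <;> first | exact InDSqrt2.zero | exact InDSqrt2.one
  · rw [show levelOp ![a, b] Hmat = hG a b from rfl, hG_apply hab]
    split_ifs <;> first
      | exact InDSqrt2.c2inv
      | exact InDSqrt2.neg_c2inv
      | exact InDSqrt2.zero
      | exact InDSqrt2.one

lemma isRealGen_unitary {n : ℕ} {G : Matrix (Fin n) (Fin n) ℂ} (h : IsRealGen G) :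
    G ∈ Matrix.unitaryGroup (Fin n) ℂ := by
  rcases h with ⟨a, rfl⟩ | ⟨a, b, hab, rfl⟩ | ⟨a, b, hab, rfl⟩
  · exact negG_unitary a
  · exact xG_unitary hab
  · exact hG_unitary hab

lemma entries_mul {n : ℕ} {A B : Matrix (Fin n) (Fin n) ℂ}
    (hA : ∀ j k, InDSqrt2 (A j k)) (hB : ∀ j k, InDSqrt2 (B j k)) :
    ∀ j k, InDSqrt2 ((A * B) j k) := by
  intro j k
  rw [Matrix.mul_apply]
  exact InDSqrt2.sum _ _ fun i _ => (hA j i).mul (hB i k)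

lemma entries_one {n : ℕ} : ∀ j k, InDSqrt2 ((1 : Matrix (Fin n) (Fin n) ℂ) j k) := by
  intro j k
  rw [Matrix.one_apply]
  split_ifs <;> first | exact InDSqrt2.one | exact InDSqrt2.zero

lemma entries_listProd {n : ℕ} (L : List (Matrix (Fin n) (Fin n) ℂ))
    (h : ∀ G ∈ L, ∀ j k, InDSqrt2 (G j k)) : ∀ j k, InDSqrt2 (L.prod j k) := by
  induction L with
  | nil => simpa using entries_one
  | cons G L ih =>
    rw [List.prod_cons]
    exact entries_mul (h G (List.mem_cons_self)) (ih fun G' hG' => h G' (List.mem_cons_of_mem G hG'))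

-- representation x * √2^k = a + b√2
lemma rep_of_InDSqrt2 {x : ℂ} (hx : InDSqrt2 x) :
    ∃ (k : ℕ) (a b : ℤ), x * c2 ^ k = a + b * c2 := by
  obtain ⟨x0, x1, hx0, hx1, rfl⟩ := hx
  rw [isDyadic_iff] at hx0 hx1
  obtain ⟨u, q, hu⟩ := hx0
  obtain ⟨v, p, hv⟩ := hx1
  refine ⟨2 * (q + p), u * 2 ^ p, v * 2 ^ q, ?_⟩
  have hc : c2 ^ (2 * (q + p)) = 2 ^ (q + p) := by
    rw [pow_mul, c2_sq']
  rw [hc]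
  push_cast
  rw [← hu, ← hv]
  ring

lemma rep_raise {x : ℂ} {k : ℕ} {a b : ℤ} (h : x * c2 ^ k = a + b * c2) :
    x * c2 ^ (k + 1) = ((2 * b : ℤ) : ℂ) + (a : ℂ) * c2 := by
  rw [pow_succ, ← mul_assoc, h]
  push_cast
  linear_combination (b : ℂ) * c2_sq

lemma rep_up {x : ℂ} {k : ℕ} {a b : ℤ} (h : x * c2 ^ k = a + b * c2) :
    ∀ m, k ≤ m → ∃ a' b' : ℤ, x * c2 ^ m = a' + b' * c2 := by
  intro m hm
  induction m, hm using Nat.le_induction with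
  | base => exact ⟨a, b, h⟩
  | succ m hm ih =>
    obtain ⟨a', b', h'⟩ := ih
    exact ⟨2 * b', a', rep_raise h'⟩

-- extracting integer equations from the norm condition
lemma sum_sq_int {n k : ℕ} (v : Fin n → ℂ) (a b : Fin n → ℤ)
    (hrep : ∀ i, v i * c2 ^ k = a i + b i * c2)
    (hnorm : ∑ i, v i * v i = 1) :
    (∑ i, ((a i) ^ 2 + 2 * (b i) ^ 2)) = 2 ^ k ∧ (∑ i, a i * b i) = 0 := by
  have e1 : ∀ i : Fin n, ((a i : ℂ) + b i * c2) * ((a i : ℂ) + b i * c2)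
      = (v i * v i) * (c2 ^ k * c2 ^ k) := fun i => by rw [← hrep i]; ring
  have e2 : ∑ i, ((a i : ℂ) + b i * c2) * ((a i : ℂ) + b i * c2) = 2 ^ k := by
    rw [Finset.sum_congr rfl fun i _ => e1 i, ← Finset.sum_mul, hnorm, one_mul,
      ← mul_pow, c2_sq]
  have e3 : ∀ i : Fin n, ((a i : ℂ) + b i * c2) * ((a i : ℂ) + b i * c2)
      = ((a i : ℂ) ^ 2 + 2 * (b i : ℂ) ^ 2) + (a i * b i : ℂ) * 2 * c2 := fun i => by
    linear_combination ((b i : ℂ)) ^ 2 * c2_sq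
  rw [Finset.sum_congr rfl fun i _ => e3 i, Finset.sum_add_distrib] at e2
  have e4 : ((∑ i, ((a i) ^ 2 + 2 * (b i) ^ 2) - 2 ^ k : ℤ) : ℂ)
      + ((2 * ∑ i, a i * b i : ℤ) : ℂ) * c2 = 0 := by
    have hsum : (2 * ∑ i, (a i : ℂ) * b i) * c2 = ∑ i, (a i : ℂ) * b i * 2 * c2 := by
      rw [Finset.mul_sum, Finset.sum_mul]
      exact Finset.sum_congr rfl fun i _ => by ring
    rw [Finset.sum_add_distrib] at e2
    push_cast
    rw [Finset.sum_add_distrib, hsum]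
    linear_combination e2
  obtain ⟨h1, h2⟩ := int_indep _ _ e4
  constructor
  · linarith [h1]
  · omega

-- parity of the number of odd entries
lemma zmod2_int (a : ℤ) : (a : ZMod 2) = if Odd a then 1 else 0 := by
  have h2 : (2 : ZMod 2) = 0 := by decide
  rcases Int.even_or_odd a with ⟨m, rfl⟩ | ⟨m, rfl⟩
  · rw [if_neg (by simp [Int.odd_iff]; omega)]
    push_cast
    linear_combination (m : ZMod 2) * h2
  · rw [if_pos ⟨m, rfl⟩]
    push_cast
    linear_combination (m : ZMod 2) * h2

lemma card_odd_even {n : ℕ} (c : Fin n → ℤ) (h : Even (∑ i, c i)) :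
    Even (Finset.univ.filter (fun i => Odd (c i))).card := by
  have h0 : ((∑ i, c i : ℤ) : ZMod 2) = 0 := by
    obtain ⟨m, hm⟩ := h
    rw [hm]
    push_cast
    have h2 : (2 : ZMod 2) = 0 := by decide
    linear_combination (m : ZMod 2) * h2
  rw [Int.cast_sum] at h0
  rw [Finset.sum_congr rfl fun i _ => zmod2_int (c i)] at h0
  rw [Finset.sum_boole] at h0
  have := (ZMod.natCast_eq_zero_iff _ 2).mp h0
  exact even_iff_two_dvd.mpr this

lemma isRealGen_negG {n : ℕ} (a : Fin n) : IsRealGen (negG a) := Or.inl ⟨a, rfl⟩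
lemma isRealGen_xG {n : ℕ} {a b : Fin n} (h : a ≠ b) : IsRealGen (xG a b) :=
  Or.inr (Or.inl ⟨a, b, h, rfl⟩)
lemma isRealGen_hG {n : ℕ} {a b : Fin n} (h : a ≠ b) : IsRealGen (hG a b) :=
  Or.inr (Or.inr ⟨a, b, h, rfl⟩)

lemma single_to_single {n : ℕ} (i₀ t : Fin n) :
    ∃ L : List (Matrix (Fin n) (Fin n) ℂ), (∀ G ∈ L, IsRealGen G) ∧
      L.prod.mulVec (fun x => if x = i₀ then (1:ℂ) else 0) = fun x => if x = t then 1 else 0 := by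
  by_cases h : i₀ = t
  · subst h
    exact ⟨[], by simp, by simp [Matrix.one_mulVec]⟩
  · refine ⟨[xG t i₀], by simpa using isRealGen_xG (fun hh => h hh.symm), ?_⟩
    rw [List.prod_singleton, xG_mulVec (fun hh => h hh.symm)]
    funext x
    by_cases hx : x = t
    · simp [hx, h]
    · by_cases hx' : x = i₀ <;> simp [hx, hx', Ne.symm h]

lemma neg_single_to_single {n : ℕ} (i₀ t : Fin n) :
    ∃ L : List (Matrix (Fin n) (Fin n) ℂ), (∀ G ∈ L, IsRealGen G) ∧
      L.prod.mulVec (fun x => if x = i₀ then (-1:ℂ) else 0) = fun x => if x = t then 1 else 0 := by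
  obtain ⟨L, hL, hLm⟩ := single_to_single i₀ t
  refine ⟨L ++ [negG i₀], ?_, ?_⟩
  · intro G hG
    rcases List.mem_append.mp hG with h | h
    · exact hL G h
    · simp at h; subst h; exact isRealGen_negG i₀
  · have hw : (negG i₀).mulVec (fun x => if x = i₀ then (-1:ℂ) else 0)
        = fun x => if x = i₀ then (1:ℂ) else 0 := by
      rw [negG_mulVec]
      funext x
      by_cases hx : x = i₀ <;> simp [hx]
    rw [List.prod_append, List.prod_singleton, ← Matrix.mulVec_mulVec, hw, hLm]

lemma key_base {n : ℕ} (v : Fin n → ℂ) (a b : Fin n → ℤ)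
    (hrep : ∀ i, v i * c2 ^ 0 = a i + b i * c2)
    (hnorm : ∑ i, v i * v i = 1) (t : Fin n) :
    ∃ L : List (Matrix (Fin n) (Fin n) ℂ), (∀ G ∈ L, IsRealGen G) ∧
      L.prod.mulVec v = fun x => if x = t then 1 else 0 := by
  obtain ⟨hA, hB⟩ := sum_sq_int v a b hrep hnorm
  norm_num at hA
  -- find the unique nonzero coordinate
  have hex : ∃ i₀, a i₀ ^ 2 + 2 * b i₀ ^ 2 ≠ 0 := by
    by_contra hall
    push_neg at hall
    rw [Finset.sum_eq_zero (fun i _ => hall i)] at hA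
    norm_num at hA
  obtain ⟨i₀, hi₀⟩ := hex
  have hnn : ∀ i : Fin n, 0 ≤ a i ^ 2 + 2 * b i ^ 2 := fun i => by positivity
  have hsplit : a i₀ ^ 2 + 2 * b i₀ ^ 2 + ∑ i ∈ Finset.univ.erase i₀, (a i ^ 2 + 2 * b i ^ 2)
      = ∑ i, (a i ^ 2 + 2 * b i ^ 2) :=
    Finset.add_sum_erase Finset.univ (fun i => a i ^ 2 + 2 * b i ^ 2) (Finset.mem_univ i₀)
  have htail_nn : 0 ≤ ∑ i ∈ Finset.univ.erase i₀, (a i ^ 2 + 2 * b i ^ 2) :=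
    Finset.sum_nonneg fun i _ => hnn i
  have h1 : 1 ≤ a i₀ ^ 2 + 2 * b i₀ ^ 2 := lt_of_le_of_ne (hnn i₀) (Ne.symm hi₀)
  rw [← hsplit] at hA
  have hterm : a i₀ ^ 2 + 2 * b i₀ ^ 2 = 1 := by omega
  have htail : ∑ i ∈ Finset.univ.erase i₀, (a i ^ 2 + 2 * b i ^ 2) = 0 := by omega
  have hzero : ∀ j, j ≠ i₀ → a j = 0 ∧ b j = 0 := by
    intro j hj
    have hmem : j ∈ Finset.univ.erase i₀ := Finset.mem_erase.mpr ⟨hj, Finset.mem_univ j⟩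
    have := (Finset.sum_eq_zero_iff_of_nonneg (fun i _ => hnn i)).mp htail j hmem
    constructor <;> nlinarith [sq_nonneg (a j), sq_nonneg (b j)]
  have hb0 : b i₀ = 0 := by nlinarith [sq_nonneg (a i₀), sq_nonneg (b i₀)]
  have ha1 : a i₀ = 1 ∨ a i₀ = -1 := by
    have h : a i₀ * a i₀ = 1 := by nlinarith
    exact Int.isUnit_iff.mp (IsUnit.of_mul_eq_one _ h)
  have hv : ∀ i, v i = a i + b i * c2 := fun i => by
    have := hrep i; rwa [pow_zero, mul_one] at this
  rcases ha1 with h1 | h1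
  · have hveq : v = fun x => if x = i₀ then (1:ℂ) else 0 := by
      funext x
      by_cases hx : x = i₀
      · rw [hv x, hx, h1, hb0]; norm_num
      · obtain ⟨ha', hb'⟩ := hzero x hx
        rw [hv x, ha', hb']; norm_num; simp [hx]
    rw [hveq]
    exact single_to_single i₀ t
  · have hveq : v = fun x => if x = i₀ then (-1:ℂ) else 0 := by
      funext x
      by_cases hx : x = i₀
      · rw [hv x, hx, h1, hb0]; norm_num
      · obtain ⟨ha', hb'⟩ := hzero x hx
        rw [hv x, ha', hb']; norm_num; simp [hx]
    rw [hveq]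
    exact neg_single_to_single i₀ t

lemma odd_sq_iff (a : ℤ) : Odd (a ^ 2) ↔ Odd a := by
  rw [← Int.not_even_iff_odd, ← Int.not_even_iff_odd, Int.even_pow]
  simp

lemma key_step {n k : ℕ}
    (IH : ∀ (v : Fin n → ℂ) (a b : Fin n → ℤ),
      (∀ i, v i * c2 ^ k = a i + b i * c2) → (∑ i, v i * v i = 1) →
      ∀ t, ∃ L : List (Matrix (Fin n) (Fin n) ℂ), (∀ G ∈ L, IsRealGen G) ∧
        L.prod.mulVec v = fun x => if x = t then 1 else 0) :
    ∀ (c : ℕ) (v : Fin n → ℂ) (a b : Fin n → ℤ),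
      (∀ i, v i * c2 ^ (k+1) = a i + b i * c2) → (∑ i, v i * v i = 1) →
      (Finset.univ.filter fun i => Odd (a i)).card = c →
      ∀ t, ∃ L : List (Matrix (Fin n) (Fin n) ℂ), (∀ G ∈ L, IsRealGen G) ∧
        L.prod.mulVec v = fun x => if x = t then 1 else 0 := by
  intro c
  induction c using Nat.strong_induction_on with
  | _ c ihc =>
  intro v a b hrep hnorm hcard t
  obtain ⟨hA, hB⟩ := sum_sq_int v a b hrep hnorm
  rcases Nat.eq_zero_or_pos c with hc0 | hcpos
  · -- all a i even: reduce the exponent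
    subst hc0
    have hS : (Finset.univ.filter fun i => Odd (a i)) = ∅ := Finset.card_eq_zero.mp hcard
    have heven : ∀ i, Even (a i) := by
      intro i
      rw [← Int.not_odd_iff_even]
      intro hodd
      have : i ∈ (Finset.univ.filter fun i => Odd (a i)) := by
        simp [hodd]
      rw [hS] at this
      exact absurd this (Finset.notMem_empty i)
    choose m hm using heven  -- a i = m i + m i
    have hrep' : ∀ i, v i * c2 ^ k = b i + m i * c2 := by
      intro i
      apply mul_right_cancel₀ c2_ne
      have h1 : v i * c2 ^ k * c2 = v i * c2 ^ (k+1) := by ring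
      rw [h1, hrep i]
      have hmi : (a i : ℂ) = m i + m i := by exact_mod_cast hm i
      linear_combination hmi - (m i : ℂ) * c2_sq'
    exact IH v b m hrep' hnorm t
  · -- pick a pair of odd entries with matching parity of b
    have hSeven : Even (Finset.univ.filter fun i => Odd (a i)).card := by
      have hsum : Even (∑ i, a i ^ 2) := by
        rw [Finset.sum_add_distrib] at hA
        have hmul : ∑ i, 2 * b i ^ 2 = 2 * ∑ i, b i ^ 2 := by rw [Finset.mul_sum]
        have h2 : (2:ℤ) ^ (k+1) = 2 ^ k + 2 ^ k := by ring
        exact ⟨2 ^ k - ∑ i, b i ^ 2, by linarith⟩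
      have := card_odd_even (fun i => a i ^ 2) hsum
      have hfeq : (Finset.univ.filter fun i => Odd (a i ^ 2))
          = (Finset.univ.filter fun i => Odd (a i)) := by
        apply Finset.filter_congr
        intro i _
        simp [odd_sq_iff]
      rwa [hfeq] at this
    have hPeven : Even (Finset.univ.filter fun i => Odd (a i) ∧ Odd (b i)).card := by
      have hsum : Even (∑ i, a i * b i) := by rw [hB]; exact Even.zero
      have := card_odd_even (fun i => a i * b i) hsum
      have hfeq : (Finset.univ.filter fun i => Odd (a i * b i))
          = (Finset.univ.filter fun i => Odd (a i) ∧ Odd (b i)) := by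
        apply Finset.filter_congr
        intro i _
        simp [Int.odd_mul]
      rwa [hfeq] at this
    -- find i ≠ j with Odd (a i), Odd (a j) and matching parity of b
    have hpair : ∃ i j : Fin n, i ≠ j ∧ Odd (a i) ∧ Odd (a j) ∧ Even (b i + b j) := by
      by_cases hP2 : 2 ≤ (Finset.univ.filter fun i => Odd (a i) ∧ Odd (b i)).card
      · obtain ⟨i, hi, j, hj, hij⟩ := Finset.one_lt_card.mp hP2
        simp only [Finset.mem_filter] at hi hj
        exact ⟨i, j, hij, hi.2.1, hj.2.1, hi.2.2.add_odd hj.2.2⟩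
      · have hP0 : (Finset.univ.filter fun i => Odd (a i) ∧ Odd (b i)).card = 0 := by
          rcases hPeven with ⟨p, hp⟩
          omega
        have hc2 : 2 ≤ c := by
          rcases hSeven with ⟨s', hs'⟩
          omega
        rw [← hcard] at hc2
        obtain ⟨i, hi, j, hj, hij⟩ := Finset.one_lt_card.mp hc2
        simp only [Finset.mem_filter] at hi hj
        have hbi : ¬ Odd (b i) := by
          intro hodd
          have : i ∈ (Finset.univ.filter fun i => Odd (a i) ∧ Odd (b i)) := by
            simp [hi.2, hodd]
          rw [Finset.card_eq_zero.mp hP0] at this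
          exact absurd this (Finset.notMem_empty i)
        have hbj : ¬ Odd (b j) := by
          intro hodd
          have : j ∈ (Finset.univ.filter fun i => Odd (a i) ∧ Odd (b i)) := by
            simp [hj.2, hodd]
          rw [Finset.card_eq_zero.mp hP0] at this
          exact absurd this (Finset.notMem_empty j)
        rw [Int.not_odd_iff_even] at hbi hbj
        exact ⟨i, j, hij, hi.2, hj.2, hbi.add hbj⟩
    obtain ⟨i, j, hij, hai, haj, hbeven⟩ := hpair
    obtain ⟨m1, hm1⟩ := hai.add_odd haj
    obtain ⟨m2, hm2⟩ := hai.sub_odd haj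
    have hbsub : Even (b i - b j) := by
      rcases hbeven with ⟨r, hr⟩
      exact ⟨b i - r, by omega⟩
    -- the new vector after applying H_[i,j]
    have hrep' : ∀ x, (if x = i then c2⁻¹ * (v i + v j) else if x = j then c2⁻¹ * (v i - v j) else v x)
        * c2 ^ (k+1)
        = ((if x = i then b i + b j else if x = j then b i - b j else a x : ℤ) : ℂ)
          + ((if x = i then m1 else if x = j then m2 else b x : ℤ) : ℂ) * c2 := by
      intro x
      have hinv : c2⁻¹ * c2 = 1 := inv_mul_cancel₀ c2_ne
      rcases eq_or_ne x i with hxi | hxi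
      · subst hxi
        simp only [if_pos rfl]
        apply mul_right_cancel₀ c2_ne
        have hm1C : (a x : ℂ) + a j = m1 + m1 := by exact_mod_cast hm1
        push_cast
        linear_combination ((v x + v j) * c2 ^ (k+1)) * hinv + hrep x + hrep j
          - (m1 : ℂ) * c2_sq' + hm1C
      · rcases eq_or_ne x j with hxj | hxj
        · subst hxj
          simp only [if_neg hxi, if_pos rfl]
          apply mul_right_cancel₀ c2_ne
          have hm2C : (a i : ℂ) - a x = m2 + m2 := by exact_mod_cast hm2
          push_cast
          linear_combination ((v i - v x) * c2 ^ (k+1)) * hinv + hrep i - hrep x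
            - (m2 : ℂ) * c2_sq' + hm2C
        · simp only [if_neg hxi, if_neg hxj]
          exact hrep x
    have hnorm' : ∑ x, ((if x = i then c2⁻¹ * (v i + v j) else if x = j then c2⁻¹ * (v i - v j) else v x)
        * (if x = i then c2⁻¹ * (v i + v j) else if x = j then c2⁻¹ * (v i - v j) else v x)) = 1 := by
      rw [sum_pair hij]
      have htail : ∀ x ∈ Finset.univ \ {i, j},
          ((if x = i then c2⁻¹ * (v i + v j) else if x = j then c2⁻¹ * (v i - v j) else v x)
          * (if x = i then c2⁻¹ * (v i + v j) else if x = j then c2⁻¹ * (v i - v j) else v x))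
          = v x * v x := by
        intro x hx
        simp only [Finset.mem_sdiff, Finset.mem_insert, Finset.mem_singleton, not_or] at hx
        simp only [if_neg hx.2.1, if_neg hx.2.2]
      rw [Finset.sum_congr rfl htail]
      simp only [eq_self_iff_true, if_true, if_neg (Ne.symm hij)]
      have hfin : v i * v i + v j * v j + ∑ x ∈ Finset.univ \ {i, j}, v x * v x = 1 := by
        rw [← sum_pair hij (fun x => v x * v x)]
        exact hnorm
      linear_combination hfin + (v i * v i + v j * v j) * c2_inv_mul
    have hcard' : (Finset.univ.filter fun x =>
        Odd (if x = i then b i + b j else if x = j then b i - b j else a x)).card = c - 2 := by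
      have hfeq : (Finset.univ.filter fun x =>
          Odd (if x = i then b i + b j else if x = j then b i - b j else a x))
          = (Finset.univ.filter fun x => Odd (a x)) \ {i, j} := by
        ext x
        simp only [Finset.mem_filter, Finset.mem_sdiff, Finset.mem_insert,
          Finset.mem_singleton, Finset.mem_univ, true_and, not_or]
        have h1 : ¬ Odd (b i + b j) := by rw [Int.not_odd_iff_even]; exact hbeven
        have h2 : ¬ Odd (b i - b j) := by rw [Int.not_odd_iff_even]; exact hbsub
        rcases eq_or_ne x i with hxi | hxi
        · subst hxi
          simp [h1]
        · rcases eq_or_ne x j with hxj | hxj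
          · subst hxj
            simp [h2, Ne.symm hij]
          · simp only [if_neg hxi, if_neg hxj]
            tauto
      rw [hfeq, Finset.card_sdiff_of_subset, hcard]
      · congr 1
        exact Finset.card_pair hij
      · intro x hx
        simp only [Finset.mem_insert, Finset.mem_singleton] at hx
        rcases hx with rfl | rfl <;> simp [hai, haj]
    have hlt : c - 2 < c := by omega
    obtain ⟨L', hL', hLm'⟩ := ihc (c - 2) hlt _ _ _ hrep' hnorm' hcard' t
    refine ⟨L' ++ [hG i j], ?_, ?_⟩
    · intro G hG
      rcases List.mem_append.mp hG with h | h
      · exact hL' G h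
      · simp at h; subst h; exact isRealGen_hG hij
    · rw [List.prod_append, List.prod_singleton, ← Matrix.mulVec_mulVec, hG_mulVec hij]
      exact hLm'

lemma key {n : ℕ} (k : ℕ) : ∀ (v : Fin n → ℂ) (a b : Fin n → ℤ),
    (∀ i, v i * c2 ^ k = a i + b i * c2) → (∑ i, v i * v i = 1) →
    ∀ t, ∃ L : List (Matrix (Fin n) (Fin n) ℂ), (∀ G ∈ L, IsRealGen G) ∧
      L.prod.mulVec v = fun x => if x = t then 1 else 0 := by
  induction k using Nat.strong_induction_on with
  | _ k ihk =>
  match k with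
  | 0 => exact fun v a b hrep hnorm t => key_base v a b hrep hnorm t
  | k + 1 =>
    intro v a b hrep hnorm t
    exact key_step (ihk k (Nat.lt_succ_self k)) _ v a b hrep hnorm rfl t

-- lifting to one more dimension
def liftMat {m : ℕ} (M : Matrix (Fin m) (Fin m) ℂ) : Matrix (Fin (m+1)) (Fin (m+1)) ℂ :=
  Matrix.of (Fin.cons (Fin.cons 1 (fun _ => 0)) (fun i => Fin.cons 0 (M i)))

lemma liftMat_zero_zero {m : ℕ} (M : Matrix (Fin m) (Fin m) ℂ) : liftMat M 0 0 = 1 := rfl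
lemma liftMat_zero_succ {m : ℕ} (M : Matrix (Fin m) (Fin m) ℂ) (j : Fin m) :
    liftMat M 0 j.succ = 0 := by simp [liftMat]
lemma liftMat_succ_zero {m : ℕ} (M : Matrix (Fin m) (Fin m) ℂ) (i : Fin m) :
    liftMat M i.succ 0 = 0 := by simp [liftMat]
lemma liftMat_succ_succ {m : ℕ} (M : Matrix (Fin m) (Fin m) ℂ) (i j : Fin m) :
    liftMat M i.succ j.succ = M i j := by simp [liftMat]

lemma liftMat_one {m : ℕ} : liftMat (1 : Matrix (Fin m) (Fin m) ℂ) = 1 := by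
  ext i j
  induction i using Fin.cases <;> induction j using Fin.cases <;>
    simp [liftMat_zero_zero, liftMat_zero_succ, liftMat_succ_zero, liftMat_succ_succ,
      Matrix.one_apply, Fin.succ_ne_zero, (Fin.succ_ne_zero _).symm, Fin.succ_inj]

lemma liftMat_mul {m : ℕ} (A B : Matrix (Fin m) (Fin m) ℂ) :
    liftMat (A * B) = liftMat A * liftMat B := by
  ext i j
  rw [Matrix.mul_apply, Fin.sum_univ_succ]
  induction i using Fin.cases <;> induction j using Fin.cases <;>
    simp [liftMat_zero_zero, liftMat_zero_succ, liftMat_succ_zero, liftMat_succ_succ,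
      Matrix.mul_apply]

lemma liftMat_prod {m : ℕ} (L : List (Matrix (Fin m) (Fin m) ℂ)) :
    (L.map liftMat).prod = liftMat L.prod := by
  induction L with
  | nil => simp [liftMat_one]
  | cons G L ih => simp [List.prod_cons, liftMat_mul, ih]

lemma liftMat_negG {m : ℕ} (a : Fin m) : liftMat (negG a) = negG a.succ := by
  ext i j
  induction i using Fin.cases <;> induction j using Fin.cases <;>
    simp [liftMat_zero_zero, liftMat_zero_succ, liftMat_succ_zero, liftMat_succ_succ,
      negG_apply, Fin.succ_ne_zero, (Fin.succ_ne_zero _).symm, Fin.succ_inj,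
      fun x : Fin m => (Fin.succ_ne_zero x).symm]

lemma liftMat_xG {m : ℕ} {a b : Fin m} (hab : a ≠ b) : liftMat (xG a b) = xG a.succ b.succ := by
  have hab' : a.succ ≠ b.succ := fun h => hab (Fin.succ_inj.mp h)
  ext i j
  induction i using Fin.cases <;> induction j using Fin.cases <;>
    simp [liftMat_zero_zero, liftMat_zero_succ, liftMat_succ_zero, liftMat_succ_succ,
      xG_apply hab, xG_apply hab', Fin.succ_ne_zero, (Fin.succ_ne_zero _).symm, Fin.succ_inj]

lemma liftMat_hG {m : ℕ} {a b : Fin m} (hab : a ≠ b) : liftMat (hG a b) = hG a.succ b.succ := by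
  have hab' : a.succ ≠ b.succ := fun h => hab (Fin.succ_inj.mp h)
  ext i j
  induction i using Fin.cases <;> induction j using Fin.cases <;>
    simp [liftMat_zero_zero, liftMat_zero_succ, liftMat_succ_zero, liftMat_succ_succ,
      hG_apply hab, hG_apply hab', Fin.succ_ne_zero, (Fin.succ_ne_zero _).symm, Fin.succ_inj]

lemma liftMat_gen {m : ℕ} {G : Matrix (Fin m) (Fin m) ℂ} (h : IsRealGen G) :
    IsRealGen (liftMat G) := by
  rcases h with ⟨a, rfl⟩ | ⟨a, b, hab, rfl⟩ | ⟨a, b, hab, rfl⟩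
  · rw [show levelOp ![a] !![-1] = negG a from rfl, liftMat_negG]
    exact isRealGen_negG a.succ
  · rw [show levelOp ![a, b] Xmat = xG a b from rfl, liftMat_xG hab]
    exact isRealGen_xG (fun h => hab (Fin.succ_inj.mp h))
  · rw [show levelOp ![a, b] Hmat = hG a b from rfl, liftMat_hG hab]
    exact isRealGen_hG (fun h => hab (Fin.succ_inj.mp h))

lemma prod_unitary {n : ℕ} (L : List (Matrix (Fin n) (Fin n) ℂ))
    (h : ∀ G ∈ L, G ∈ Matrix.unitaryGroup (Fin n) ℂ) :
    L.prod ∈ Matrix.unitaryGroup (Fin n) ℂ := by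
  induction L with
  | nil => simpa using one_mem _
  | cons G L ih =>
    rw [List.prod_cons]
    exact mul_mem (h G (List.mem_cons_self))
      (ih fun G' hG' => h G' (List.mem_cons_of_mem G hG'))

theorem main_thm : ∀ (n : ℕ) (V : Matrix (Fin n) (Fin n) ℂ),
    V ∈ Matrix.unitaryGroup (Fin n) ℂ → (∀ j k, InDSqrt2 (V j k)) →
    ∃ L : List (Matrix (Fin n) (Fin n) ℂ),
      (∀ G ∈ L, IsRealGen G) ∧ L.prod * V = 1 := by
  intro n
  induction n with
  | zero =>
    intro V _ _
    refine ⟨[], by simp, ?_⟩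
    rw [List.prod_nil, one_mul]
    ext i j
    exact i.elim0
  | succ m ih =>
    intro V hV hR
    -- representation of the first column
    have hrep0 : ∀ i : Fin (m+1), ∃ (k : ℕ) (a b : ℤ), V i 0 * c2 ^ k = a + b * c2 :=
      fun i => rep_of_InDSqrt2 (hR i 0)
    choose kk aa bb hk using hrep0
    set K := Finset.univ.sup kk with hK
    have hrepK : ∀ i : Fin (m+1), ∃ a b : ℤ, V i 0 * c2 ^ K = a + b * c2 := by
      intro i
      exact rep_up (hk i) K (Finset.le_sup (Finset.mem_univ i))
    choose A B hAB using hrepK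
    -- the norm of the first column
    have hstar : star V * V = 1 := Matrix.mem_unitaryGroup_iff'.mp hV
    have hnorm : ∑ i, V i 0 * V i 0 = 1 := by
      have := congrFun (congrFun hstar 0) 0
      rw [Matrix.mul_apply] at this
      simp only [Matrix.conjTranspose_apply, Matrix.star_apply] at this
      rw [Matrix.one_apply_eq] at this
      calc ∑ i, V i 0 * V i 0 = ∑ i, star (V i 0) * V i 0 := by
            refine Finset.sum_congr rfl fun i _ => ?_
            rw [show star (V i 0) = (starRingEnd ℂ) (V i 0) from rfl, InDSqrt2.real (hR i 0)]
      _ = 1 := this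
    obtain ⟨L₁, hL₁, hLm₁⟩ := key K (fun i => V i 0) A B hAB hnorm 0
    set W := L₁.prod * V with hWdef
    have hWu : W ∈ Matrix.unitaryGroup (Fin (m+1)) ℂ :=
      mul_mem (prod_unitary L₁ fun G hG => isRealGen_unitary (hL₁ G hG)) hV
    have hWr : ∀ j k, InDSqrt2 (W j k) :=
      entries_mul (entries_listProd L₁ fun G hG => isRealGen_entries (hL₁ G hG)) hR
    have hWcol : ∀ i, W i 0 = if i = 0 then 1 else 0 := by
      intro i
      have : W i 0 = (L₁.prod.mulVec fun i => V i 0) i := by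
        rw [hWdef, Matrix.mul_apply, Matrix.mulVec]
        rfl
      rw [this, hLm₁]
    have hWstar : star W * W = 1 := Matrix.mem_unitaryGroup_iff'.mp hWu
    have hWrow : ∀ j, W 0 j = if j = 0 then 1 else 0 := by
      intro j
      rcases eq_or_ne j 0 with rfl | hj
      · exact hWcol 0
      · have := congrFun (congrFun hWstar 0) j
        rw [Matrix.mul_apply, Matrix.one_apply_ne (Ne.symm hj)] at this
        have hterm : ∀ x : Fin (m+1), (star W) 0 x * W x j
            = if x = 0 then W 0 j else 0 := by
          intro x
          simp only [Matrix.conjTranspose_apply, Matrix.star_apply]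
          rw [show star (W x 0) = (starRingEnd ℂ) (W x 0) from rfl, hWcol x]
          rcases eq_or_ne x 0 with rfl | hx
          · simp
          · simp [hx]
        rw [Finset.sum_congr rfl fun x _ => hterm x, Finset.sum_ite_eq'] at this
        simp only [Finset.mem_univ, if_true] at this
        rw [this, if_neg hj]
    -- the lower-right block
    set W' : Matrix (Fin m) (Fin m) ℂ := fun i j => W i.succ j.succ with hW'def
    have hW'u : W' ∈ Matrix.unitaryGroup (Fin m) ℂ := by
      rw [Matrix.mem_unitaryGroup_iff']
      ext i j
      have := congrFun (congrFun hWstar i.succ) j.succ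
      rw [Matrix.mul_apply, Fin.sum_univ_succ] at this
      simp only [Matrix.conjTranspose_apply, Matrix.star_apply] at this
      rw [show star (W 0 i.succ) = (starRingEnd ℂ) (W 0 i.succ) from rfl,
        hWrow i.succ, if_neg (Fin.succ_ne_zero i)] at this
      simp only [map_zero, zero_mul, zero_add] at this
      rw [Matrix.mul_apply]
      simp only [Matrix.conjTranspose_apply, Matrix.star_apply]
      simp only [hW'def]
      rw [this]
      rw [Matrix.one_apply, Matrix.one_apply]
      by_cases hij : i = j
      · simp [hij]
      · rw [if_neg hij, if_neg (fun h => hij (Fin.succ_inj.mp h))]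
    have hW'r : ∀ i j, InDSqrt2 (W' i j) := fun i j => hWr i.succ j.succ
    obtain ⟨L₂, hL₂, hLm₂⟩ := ih W' hW'u hW'r
    have hWlift : W = liftMat W' := by
      ext i j
      induction i using Fin.cases with
      | zero =>
        induction j using Fin.cases with
        | zero => rw [liftMat_zero_zero, hWrow 0, if_pos rfl]
        | succ j => rw [liftMat_zero_succ, hWrow j.succ, if_neg (Fin.succ_ne_zero j)]
      | succ i =>
        induction j using Fin.cases with
        | zero => rw [liftMat_succ_zero, hWcol i.succ, if_neg (Fin.succ_ne_zero i)]
        | succ j => rw [liftMat_succ_succ]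
    refine ⟨(L₂.map liftMat) ++ L₁, ?_, ?_⟩
    · intro G hG
      rcases List.mem_append.mp hG with h | h
      · obtain ⟨G', hG', rfl⟩ := List.mem_map.mp h
        exact liftMat_gen (hL₂ G' hG')
      · exact hL₁ G h
    · rw [List.prod_append, mul_assoc, ← hWdef, hWlift, liftMat_prod, ← liftMat_mul,
        hLm₂, liftMat_one]


/-- Every unitary matrix with entries in `ℤ[1/√2]` is a product of the
generators `(-1)_[a]`, `X_[a,b]`, `H_[a,b]`. -/
theorem stmt2 (n : ℕ) (hn : 1 ≤ n) (V : Matrix (Fin n) (Fin n) ℂ)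
    (hV : V ∈ Matrix.unitaryGroup (Fin n) ℂ)
    (hR : ∀ j k, InDSqrt2 (V j k)) :
    ∃ L : List (Matrix (Fin n) (Fin n) ℂ),
      (∀ G ∈ L, IsRealGen G) ∧ L.prod * V = 1 :=
  main_thm n V hV hR
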